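/- arXiv:2506.16239 — 4 statements merged into one kernel-verified Lean document; each statement's English description precedes it below -/
import Mathlib

section
/- (Quaternionic Taylor-coefficient formula.) Let I ∈ ℍ be an imaginary unit, p₀ ∈ ℍ, R > 0 (possibly R = ∞), and let (a_n)_{n≥0} be quaternions lying in the slice ℂ_I such that for every s with 0 < s < R the series Σ_{n≥0} ‖a_n‖·sⁿ converges. Define f(p) = Σ_{n=0}^∞ a_n·(p − p₀)ⁿ for ‖p − p₀‖ < R. Then for every r with 0 < r < R, with γ(t) = p₀ + r·exp(t·I) on [0, 2π], and every n ≥ 0: ∫_0^{2π} (γ(t) − p₀)^{−(n+1)} * f(γ(t)) * γ'(t) dt = 2π·I·a_n. (Equivalently, a_n = (2π·I)⁻¹ · ∫_{C_r} (p − p₀)^{−(n+1)} f(p) dp.) -/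
open scoped Quaternion

lemma quat_re_zero (I : ℍ[ℝ]) (hI : I * I = -1) :
    I.re = 0 ∧ I.imI^2 + I.imJ^2 + I.imK^2 = 1 := by
  have h1 := congrArg QuaternionAlgebra.re hI
  have h2 := congrArg QuaternionAlgebra.imI hI
  have h3 := congrArg QuaternionAlgebra.imJ hI
  have h4 := congrArg QuaternionAlgebra.imK hI
  simp [Quaternion.re_mul, Quaternion.imI_mul, Quaternion.imJ_mul, Quaternion.imK_mul] at h1 h2 h3 h4
  constructor
  · nlinarith [sq_nonneg I.re, sq_nonneg I.imI, sq_nonneg I.imJ, sq_nonneg I.imK]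
  · nlinarith [sq_nonneg I.re, sq_nonneg I.imI, sq_nonneg I.imJ, sq_nonneg I.imK]

lemma lift_isometry (I : ℍ[ℝ]) (hI : I * I = -1) (z : ℂ) :
    ‖Complex.liftAux I hI z‖ = ‖z‖ := by
  obtain ⟨hre, him⟩ := quat_re_zero I hI
  rw [Complex.liftAux_apply]
  have key : ‖algebraMap ℝ ℍ[ℝ] z.re + z.im • I‖^2 = ‖z‖^2 := by
    rw [sq, ← Quaternion.normSq_eq_norm_mul_self, Quaternion.normSq_def']
    rw [show algebraMap ℝ ℍ[ℝ] z.re = ((z.re:ℝ) : ℍ[ℝ]) from rfl]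
    simp only [Quaternion.re_add, Quaternion.imI_add, Quaternion.imJ_add, Quaternion.imK_add,
      Quaternion.re_smul, Quaternion.imI_smul, Quaternion.imJ_smul, Quaternion.imK_smul,
      Quaternion.re_coe, Quaternion.imI_coe, Quaternion.imJ_coe, Quaternion.imK_coe,
      smul_eq_mul, Complex.sq_norm, Complex.normSq_apply, hre]
    ring_nf
    nlinarith [him]
  have h1 := norm_nonneg (algebraMap ℝ ℍ[ℝ] z.re + z.im • I)
  have h2 := norm_nonneg z
  nlinarith [key]

theorem quaternion_taylor_coefficient_formula
    (I : ℍ[ℝ]) (hI : I * I = -1) (p₀ : ℍ[ℝ]) (R : ENNReal) (hR : 0 < R)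
    (a : ℕ → ℍ[ℝ]) (ha : ∀ n, ∃ x v : ℝ, a n = (x : ℍ[ℝ]) + v • I)
    (hsum : ∀ s : ℝ, 0 < s → ENNReal.ofReal s < R →
      Summable (fun n : ℕ => ‖a n‖ * s ^ n))
    (f : ℍ[ℝ] → ℍ[ℝ])
    (hf : ∀ p : ℍ[ℝ], ENNReal.ofReal ‖p - p₀‖ < R →
      f p = ∑' n : ℕ, a n * (p - p₀) ^ n)
    (r : ℝ) (hr : 0 < r) (hrR : ENNReal.ofReal r < R)
    (γ γ' : ℝ → ℍ[ℝ])
    (hγ : ∀ t, γ t = p₀ + r • NormedSpace.exp (t • I))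
    (hγ' : ∀ t, γ' t = r • (I * NormedSpace.exp (t • I)))
    (n : ℕ) :
    ∫ t in (0:ℝ)..(2 * Real.pi), ((γ t - p₀)⁻¹) ^ (n + 1) * f (γ t) * γ' t
      = (2 * Real.pi) • (I * a n) := by
  classical
  set φ : ℂ →ₐ[ℝ] ℍ[ℝ] := Complex.liftAux I hI with hφdef
  have hφI : φ Complex.I = I := Complex.liftAux_apply_I I hI
  have hφcont : Continuous φ := φ.toLinearMap.continuous_of_finiteDimensional
  have hφnorm : ∀ z, ‖φ z‖ = ‖z‖ := lift_isometry I hI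
  -- complex coefficients
  choose x v hxv using ha
  set α : ℕ → ℂ := fun m => ⟨x m, v m⟩ with hα
  have hφα : ∀ m, φ (α m) = a m := by
    intro m
    rw [hφdef, Complex.liftAux_apply, hxv m]
    rfl
  have hnα : ∀ m, ‖α m‖ = ‖a m‖ := fun m => by rw [← hφα m, hφnorm]
  -- choose s with r < s, ofReal s < R
  obtain ⟨s, hs0, hs1, hs2⟩ := ENNReal.lt_iff_exists_real_btwn.1 hrR
  have hrs : r < s := (ENNReal.ofReal_lt_ofReal_iff_of_nonneg hr.le).1 hs1
  have hspos : 0 < s := lt_trans hr hrs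
  have hsums : Summable fun m => ‖α m‖ * s ^ m := by
    simpa only [hnα] using hsum s hspos hs2
  -- the complex power series and sum
  set g : ℂ → ℂ := fun w => ∑' m, α m * w ^ m with hg
  set p : FormalMultilinearSeries ℂ ℂ ℂ :=
    fun m => ContinuousMultilinearMap.mkPiRing ℂ (Fin m) (α m) with hp
  have hps : HasFPowerSeriesOnBall g p 0 (ENNReal.ofReal s) := by
    constructor
    · rw [show ENNReal.ofReal s = (s.toNNReal : ENNReal) from rfl]
      apply p.le_radius_of_summable
      simpa [hp, ContinuousMultilinearMap.norm_mkPiRing,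
        Real.coe_toNNReal s hspos.le] using hsums
    · exact ENNReal.ofReal_pos.2 hspos
    · intro y hy
      have hyn : ‖y‖ < s := by
        rw [Metric.mem_eball, edist_zero_right, ← ofReal_norm,
          ENNReal.ofReal_lt_ofReal_iff hspos] at hy
        exact hy
      have hsumy : Summable fun m => α m * y ^ m := by
        apply Summable.of_norm
        apply Summable.of_nonneg_of_le (fun m => norm_nonneg _) _ hsums
        intro m
        rw [norm_mul, norm_pow]
        exact mul_le_mul_of_nonneg_left
          (pow_le_pow_left₀ (norm_nonneg _) hyn.le m) (norm_nonneg _)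
      have := hsumy.hasSum
      simpa [hp, hg, ContinuousMultilinearMap.mkPiRing_apply, smul_eq_mul,
        mul_comm] using this
  -- differentiability on closed ball r
  have hsub : Metric.closedBall (0:ℂ) r ⊆ Metric.eball 0 (ENNReal.ofReal s) := by
    intro w hw
    rw [Metric.mem_closedBall, dist_zero_right] at hw
    rw [Metric.mem_eball, edist_zero_right, ← ofReal_norm]
    exact (ENNReal.ofReal_lt_ofReal_iff hspos).2 (lt_of_le_of_lt hw hrs)
  have hgc : ContinuousOn g (Metric.eball (0:ℂ) (ENNReal.ofReal s)) :=
    hps.analyticOnNhd.differentiableOn.continuousOn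
  have hd : DifferentiableOn ℂ g (Metric.closedBall 0 (r.toNNReal : ℝ)) := by
    rw [Real.coe_toNNReal r hr.le]
    exact hps.analyticOnNhd.differentiableOn.mono hsub
  have hrnn : (0:NNReal) < r.toNNReal := Real.toNNReal_pos.2 hr
  have hcauchy := hd.hasFPowerSeriesOnBall hrnn
  have hpeq : p = cauchyPowerSeries g 0 (r.toNNReal : ℝ) :=
    hps.hasFPowerSeriesAt.eq_formalMultilinearSeries hcauchy.hasFPowerSeriesAt
  have hkey : (∮ z in C(0, r), (z⁻¹) ^ n • z⁻¹ • g z)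
      = (2 * (Real.pi:ℂ) * Complex.I) • α n := by
    have h1 : (p n fun _ => 1) = α n := by
      simp [hp, ContinuousMultilinearMap.mkPiRing_apply]
    rw [hpeq] at h1
    rw [show cauchyPowerSeries g 0 (r.toNNReal : ℝ) n =
      ContinuousMultilinearMap.mkPiRing ℂ (Fin n) ((2 * (Real.pi:ℂ) * Complex.I)⁻¹ •
        ∮ z in C(0, (r.toNNReal : ℝ)), (z - 0)⁻¹ ^ n • (z - 0)⁻¹ • g z) from rfl] at h1
    simp only [ContinuousMultilinearMap.mkPiRing_apply, Finset.prod_const, one_pow,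
      one_smul, sub_zero, Real.coe_toNNReal r hr.le] at h1
    have h2πI : (2 * (Real.pi:ℂ) * Complex.I) ≠ 0 := by
      simp [Complex.I_ne_zero, Real.pi_ne_zero]
    rw [← h1, smul_smul, mul_inv_cancel₀ h2πI, one_smul]
  -- relate quaternionic path to complex circle
  have hexpφ : ∀ t : ℝ, φ (Complex.exp ((t:ℂ) * Complex.I)) = NormedSpace.exp (t • I) := by
    intro t
    rw [Complex.exp_eq_exp_ℂ,
      NormedSpace.map_exp φ hφcont]
    congr 1
    rw [← Complex.real_smul, map_smul, hφI]
  have hz : ∀ t : ℝ, γ t - p₀ = φ (circleMap 0 r t) := by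
    intro t
    rw [hγ t, add_sub_cancel_left, circleMap, zero_add, map_mul, hexpφ,
      show φ ((r:ℝ):ℂ) = algebraMap ℝ ℍ[ℝ] r from φ.commutes r, ← Algebra.smul_def]
  have hne : ∀ t : ℝ, circleMap 0 r t ≠ 0 := fun t => circleMap_ne_center hr.ne'
  have hnz : ∀ t : ℝ, ‖γ t - p₀‖ = r := by
    intro t
    rw [hz t, hφnorm]
    simp [norm_circleMap_zero, abs_of_pos hr]
  have hIcomm : ∀ t : ℝ, NormedSpace.exp (t • I) * I = I * NormedSpace.exp (t • I) := by
    intro t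
    rw [← hexpφ t, ← hφI, ← map_mul, ← map_mul, mul_comm]
  have hγ'z : ∀ t : ℝ, γ' t = φ (deriv (circleMap 0 r) t) := by
    intro t
    rw [hγ' t, deriv_circleMap, map_mul, hφI, ← hz t, hγ t, add_sub_cancel_left,
      smul_mul_assoc, hIcomm t]
  have hfg : ∀ t : ℝ, f (γ t) = φ (g (circleMap 0 r t)) := by
    intro t
    rw [hf _ (by rw [hnz t]; exact hrR)]
    have hsummz : Summable fun m => α m * circleMap 0 r t ^ m := by
      apply Summable.of_norm
      have he : (fun m => ‖α m * circleMap 0 r t ^ m‖) = fun m => ‖a m‖ * r ^ m := by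
        funext m
        rw [norm_mul, norm_pow, hnα]
        congr 2
        simp [norm_circleMap_zero, abs_of_pos hr]
      rw [he]
      exact hsum r hr hrR
    have hmap := (hsummz.hasSum.map (φ : ℂ →ₐ[ℝ] ℍ[ℝ]) hφcont).tsum_eq
    show _ = φ (∑' m, α m * circleMap 0 r t ^ m)
    rw [← hmap]
    apply tsum_congr
    intro m
    show a m * (γ t - p₀) ^ m = φ (α m * circleMap 0 r t ^ m)
    rw [map_mul, map_pow, hφα, hz t]
  have hpt : ∀ t : ℝ, ((γ t - p₀)⁻¹) ^ (n + 1) * f (γ t) * γ' t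
      = φ (deriv (circleMap 0 r) t *
        ((circleMap 0 r t)⁻¹ ^ n * ((circleMap 0 r t)⁻¹ * g (circleMap 0 r t)))) := by
    intro t
    rw [hz t, ← map_inv₀, hfg t, hγ'z t, ← map_pow, ← map_mul, ← map_mul]
    congr 1
    ring
  set F : ℝ → ℂ := fun t => deriv (circleMap 0 r) t *
    ((circleMap 0 r t)⁻¹ ^ n * ((circleMap 0 r t)⁻¹ * g (circleMap 0 r t))) with hF
  have hFcont : Continuous F := by
    have h1 : Continuous fun t => deriv (circleMap 0 r) t := by
      simp only [deriv_circleMap]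
      exact (continuous_circleMap 0 r).mul continuous_const
    have h2 : Continuous fun t => (circleMap 0 r t)⁻¹ :=
      (continuous_circleMap 0 r).inv₀ hne
    have h3 : Continuous fun t => g (circleMap 0 r t) :=
      hgc.comp_continuous (continuous_circleMap 0 r)
        (fun t => hsub (circleMap_mem_closedBall 0 hr.le t))
    exact h1.mul ((h2.pow n).mul (h2.mul h3))
  set Φ : ℂ →L[ℝ] ℍ[ℝ] := LinearMap.toContinuousLinearMap φ.toLinearMap with hΦ
  have hΦφ : ∀ z, Φ z = φ z := fun z => rfl
  have hint : ∫ t in (0:ℝ)..(2*Real.pi), F t = (2 * (Real.pi:ℂ) * Complex.I) • α n := by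
    rw [← hkey, circleIntegral]
    apply intervalIntegral.integral_congr
    intro t _
    simp only [hF, smul_eq_mul]
  calc ∫ t in (0:ℝ)..(2*Real.pi), ((γ t - p₀)⁻¹) ^ (n+1) * f (γ t) * γ' t
      = ∫ t in (0:ℝ)..(2*Real.pi), Φ (F t) := by
        apply intervalIntegral.integral_congr
        intro t _
        show ((γ t - p₀)⁻¹) ^ (n+1) * f (γ t) * γ' t = Φ (F t)
        rw [hΦφ]
        exact hpt t
    _ = Φ (∫ t in (0:ℝ)..(2*Real.pi), F t) :=
        Φ.intervalIntegral_comp_comm (hFcont.intervalIntegrable _ _)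
    _ = (2*Real.pi) • (I * a n) := by
        rw [hint, hΦφ]
        rw [show (2 * (Real.pi:ℂ) * Complex.I) • α n
            = ((2*Real.pi : ℝ):ℂ) * (Complex.I * α n) by
          rw [smul_eq_mul]; push_cast; ring]
        rw [map_mul, map_mul, hφI, hφα,
          show φ (((2*Real.pi : ℝ)):ℂ) = algebraMap ℝ ℍ[ℝ] (2*Real.pi) from φ.commutes _,
          ← Algebra.smul_def]
end

section
/- (Cauchy's theorem on an H-plane.) Let I ∈ ℍ be an imaginary unit and φ_I : ℂ → ℍ the unique ℝ-algebra homomorphism with φ_I(i) = I. Let U ⊆ ℂ be an open disc, f : ℂ → ℂ differentiable (holomorphic) on U, and ζ : [α,β] → U a continuously differentiable closed path (ζ(α) = ζ(β)). Then the quaternionic contour integral of the transferred function around the transferred closed path vanishes: ∫_0 := ∫_α^β φ_I(f(ζ(t))) * (φ_I ∘ ζ)'(t) dt = 0. -/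
open scoped Quaternion

theorem quaternion_cauchy_theorem_on_H_plane
    (I : ℍ[ℝ]) (hI : I * I = -1)
    (φ : ℂ →ₐ[ℝ] ℍ[ℝ]) (hφ : φ Complex.I = I)
    (z₀ : ℂ) (ρ : ℝ) (U : Set ℂ) (hU : U = Metric.ball z₀ ρ)
    (f : ℂ → ℂ) (hf : DifferentiableOn ℂ f U)
    (α β : ℝ) (hαβ : α ≤ β)
    (ζ ζ' : ℝ → ℂ)
    (hmem : ∀ t ∈ Set.Icc α β, ζ t ∈ U)
    (hζ : ∀ t ∈ Set.Icc α β, HasDerivAt ζ (ζ' t) t)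
    (hζ' : ContinuousOn ζ' (Set.Icc α β))
    (hclosed : ζ α = ζ β) :
    ∫ t in α..β, φ (f (ζ t)) * φ (ζ' t) = 0 := by
  subst hU
  -- continuity of ζ on Icc
  have hζc : ContinuousOn ζ (Set.Icc α β) := fun t ht =>
    (hζ t ht).continuousAt.continuousWithinAt
  -- the image of the path is a compact subset of the ball
  have hKc : IsCompact (ζ '' Set.Icc α β) := (isCompact_Icc).image_of_continuousOn hζc
  have hKne : (ζ '' Set.Icc α β).Nonempty :=
    ⟨ζ α, Set.mem_image_of_mem _ (Set.left_mem_Icc.2 hαβ)⟩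
  obtain ⟨w, hwK, hwmax'⟩ := hKc.exists_isMaxOn hKne
    ((continuous_id.dist continuous_const).continuousOn (s := ζ '' Set.Icc α β))
  have hwmax : ∀ z ∈ ζ '' Set.Icc α β, dist z z₀ ≤ dist w z₀ := fun z hz => hwmax' hz
  set d : ℝ := dist w z₀ with hd
  have hd0 : 0 ≤ d := dist_nonneg
  have hdρ : d < ρ := by
    obtain ⟨t, ht, rfl⟩ := hwK
    exact hmem t ht
  set s₁ : ℝ := (2 * d + ρ) / 3 with hs₁
  set s₂ : ℝ := (d + 2 * ρ) / 3 with hs₂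
  have h01 : d < s₁ := by rw [hs₁]; linarith
  have h12 : s₁ < s₂ := by rw [hs₂, hs₁]; linarith
  have h2ρ : s₂ < ρ := by rw [hs₂]; linarith
  have hs₁0 : 0 < s₁ := lt_of_le_of_lt hd0 h01
  have hs₂0 : 0 < s₂ := lt_trans hs₁0 h12
  -- the path stays in ball z₀ s₁
  have hmem₁ : ∀ t ∈ Set.Icc α β, ζ t ∈ Metric.ball z₀ s₁ := fun t ht => by
    have := hwmax (ζ t) (Set.mem_image_of_mem _ ht)
    exact Metric.mem_ball.2 (lt_of_le_of_lt this h01)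
  -- power series of f on the ball of radius s₂
  have hdiff : DifferentiableOn ℂ f (Metric.closedBall z₀ s₂.toNNReal) := by
    apply hf.mono
    intro z hz
    have : dist z z₀ ≤ s₂ := by
      simpa [Real.coe_toNNReal _ hs₂0.le] using Metric.mem_closedBall.1 hz
    exact Metric.mem_ball.2 (lt_of_le_of_lt this h2ρ)
  have hp := hdiff.hasFPowerSeriesOnBall (by simpa using hs₂0)
  set p := cauchyPowerSeries f z₀ s₂.toNNReal with hpdef
  -- summable bound
  have hrad : (s₁.toNNReal : ENNReal) < p.radius := by
    refine lt_of_lt_of_le ?_ hp.r_le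
    rw [ENNReal.coe_lt_coe]
    exact_mod_cast (Real.toNNReal_lt_toNNReal_iff hs₂0).2 h12
  have hsum : Summable fun n => ‖p n‖ * s₁ ^ n := by
    have := p.summable_norm_mul_pow hrad
    simpa [Real.coe_toNNReal _ hs₁0.le] using this
  -- the primitive as a power series
  set g : ℕ → ℂ → ℂ := fun n z => (p.coeff n / (n + 1)) * (z - z₀) ^ (n + 1) with hg
  set g' : ℕ → ℂ → ℂ := fun n z => p.coeff n * (z - z₀) ^ n with hg'
  have hgderiv : ∀ n z, HasDerivAt (g n) (g' n z) z := by
    intro n z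
    have h1 : HasDerivAt (fun z : ℂ => (z - z₀) ^ (n + 1))
        ((n + 1 : ℕ) * (z - z₀) ^ n) z := by
      simpa using ((hasDerivAt_id z).sub_const z₀).fun_pow (n + 1)
    have h2 := h1.const_mul (p.coeff n / (n + 1))
    refine h2.congr_deriv ?_
    have hn1 : ((n : ℂ) + 1) ≠ 0 := Nat.cast_add_one_ne_zero n
    simp only [hg']
    push_cast
    field_simp
  have happly : ∀ (n : ℕ) (y : ℂ), (p n fun _ => y) = p.coeff n * y ^ n := by
    intro n y
    rw [FormalMultilinearSeries.apply_eq_pow_smul_coeff, smul_eq_mul, mul_comm]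
  have hbound : ∀ n z, z ∈ Metric.ball z₀ s₁ → ‖g' n z‖ ≤ ‖p n‖ * s₁ ^ n := by
    intro n z hz
    have hz' : ‖z - z₀‖ ≤ s₁ := by
      have := Metric.mem_ball.1 hz
      rw [dist_eq_norm] at this
      exact this.le
    calc ‖g' n z‖ = ‖p n fun _ => z - z₀‖ := by rw [happly]
    _ ≤ ‖p n‖ * ∏ _i : Fin n, ‖z - z₀‖ := (p n).le_opNorm _
    _ = ‖p n‖ * ‖z - z₀‖ ^ n := by simp [Finset.prod_const]
    _ ≤ ‖p n‖ * s₁ ^ n := by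
        exact mul_le_mul_of_nonneg_left (pow_le_pow_left₀ (norm_nonneg _) hz' n)
          (norm_nonneg _)
  have hg0 : Summable fun n => g n z₀ := by
    have he : (fun n => g n z₀) = fun _ => (0 : ℂ) := by funext n; simp [hg]
    rw [he]; exact summable_zero
  -- F is a primitive of f on ball z₀ s₁
  set F : ℂ → ℂ := fun z => ∑' n, g n z with hF
  have hFderiv : ∀ z ∈ Metric.ball z₀ s₁, HasDerivAt F (f z) z := by
    intro z hz
    have key := hasDerivAt_tsum_of_isPreconnected hsum Metric.isOpen_ball
      ((convex_ball z₀ s₁).isPreconnected) (fun n y _ => hgderiv n y) hbound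
      (Metric.mem_ball_self hs₁0) hg0 hz
    have hsumf : HasSum (fun n => g' n z) (f z) := by
      have hmem' : z - z₀ ∈ Metric.eball (0 : ℂ) s₂.toNNReal := by
        rw [Metric.mem_eball, edist_zero_right, enorm_eq_nnnorm, ENNReal.coe_lt_coe]
        have hlt : ‖z - z₀‖ < s₂ := by
          have := Metric.mem_ball.1 hz; rw [dist_eq_norm] at this
          exact this.trans h12
        have h2 : (s₂.toNNReal : ℝ) = s₂ := Real.coe_toNNReal _ hs₂0.le
        rw [← NNReal.coe_lt_coe, coe_nnnorm, h2]
        exact hlt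
      have := hp.hasSum hmem'
      simp only [add_sub_cancel] at this
      have e : (fun n => g' n z) = fun n => (p n fun _ => z - z₀) := by
        funext n
        rw [hg', happly]
      rw [e]; exact this
    rw [hsumf.tsum_eq] at key
    exact key
  -- chain rule along the path
  have hcomp : ∀ t ∈ Set.Icc α β, HasDerivAt (fun t => F (ζ t)) (ζ' t • f (ζ t)) t := by
    intro t ht
    exact (hFderiv (ζ t) (hmem₁ t ht)).scomp t (hζ t ht)
  -- integrability of the complex integrand
  have hcont : ContinuousOn (fun t => ζ' t • f (ζ t)) (Set.Icc α β) := by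
    apply hζ'.smul
    exact (hf.continuousOn.comp hζc hmem)
  have hII : IntervalIntegrable (fun t => ζ' t • f (ζ t)) MeasureTheory.volume α β := by
    apply ContinuousOn.intervalIntegrable
    rwa [Set.uIcc_of_le hαβ]
  -- fundamental theorem of calculus
  have hFTC : ∫ t in α..β, ζ' t • f (ζ t) = F (ζ β) - F (ζ α) := by
    apply intervalIntegral.integral_eq_sub_of_hasDerivAt
    · intro t ht
      rw [Set.uIcc_of_le hαβ] at ht
      exact hcomp t ht
    · exact hII
  have hzero : ∫ t in α..β, ζ' t • f (ζ t) = 0 := by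
    rw [hFTC, hclosed, sub_self]
  -- transfer through φ
  let L : ℂ →L[ℝ] ℍ[ℝ] := LinearMap.toContinuousLinearMap φ.toLinearMap
  have hLφ : ∀ z : ℂ, L z = φ z := fun z => rfl
  calc ∫ t in α..β, φ (f (ζ t)) * φ (ζ' t)
      = ∫ t in α..β, L (ζ' t • f (ζ t)) := by
        apply intervalIntegral.integral_congr
        intro t _
        show φ (f (ζ t)) * φ (ζ' t) = L (ζ' t • f (ζ t))
        rw [hLφ, smul_eq_mul, mul_comm (ζ' t), map_mul]
    _ = L (∫ t in α..β, ζ' t • f (ζ t)) := (L.intervalIntegral_comp_comm hII)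
    _ = 0 := by rw [hzero, map_zero]
end

section
/- (Cauchy's integral formula for an H-circle.) Let I ∈ ℍ be an imaginary unit and φ_I : ℂ → ℍ the unique ℝ-algebra homomorphism with φ_I(i) = I. Let z₀ ∈ ℂ, r > 0, and let f : ℂ → ℂ be differentiable (holomorphic) on an open set containing the closed disc {z : |z − z₀| ≤ r}. Set ζ(t) = z₀ + r·e^{it} and γ = φ_I ∘ ζ for t ∈ [0, 2π]. Then for every w ∈ ℂ with |w − z₀| < r: ∫_0^{2π} (γ(t) − φ_I(w))⁻¹ * φ_I(f(ζ(t))) * γ'(t) dt = 2π·I·φ_I(f(w)). -/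
open scoped Quaternion

theorem quaternion_cauchy_integral_formula_H_circle
    (I : ℍ[ℝ]) (hI : I * I = -1)
    (φ : ℂ →ₐ[ℝ] ℍ[ℝ]) (hφ : φ Complex.I = I)
    (z₀ : ℂ) (r : ℝ) (hr : 0 < r)
    (U : Set ℂ) (hUopen : IsOpen U) (hU : Metric.closedBall z₀ r ⊆ U)
    (f : ℂ → ℂ) (hf : DifferentiableOn ℂ f U)
    (ζ : ℝ → ℂ) (hζ : ∀ t, ζ t = z₀ + r * Complex.exp (t * Complex.I))
    (γ γ' : ℝ → ℍ[ℝ])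
    (hγ : ∀ t, γ t = φ (ζ t))
    (hγ' : ∀ t, γ' t = φ (r * Complex.I * Complex.exp (t * Complex.I)))
    (w : ℂ) (hw : ‖w - z₀‖ < r) :
    ∫ t in (0:ℝ)..(2 * Real.pi), (γ t - φ w)⁻¹ * φ (f (ζ t)) * γ' t
      = (2 * Real.pi) • (I * φ (f w)) := by
  set g : ℝ → ℂ := fun t =>
    (ζ t - w)⁻¹ * f (ζ t) * (r * Complex.I * Complex.exp (t * Complex.I)) with hg
  have hζc : Continuous ζ := by
    have : ζ = fun t : ℝ => z₀ + (r : ℂ) * Complex.exp ((t : ℂ) * Complex.I) := funext hζ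
    rw [this]; continuity
  have hζmem : ∀ t, ζ t ∈ Metric.closedBall z₀ r := by
    intro t
    simp only [Metric.mem_closedBall, dist_eq_norm, hζ]
    simp [abs_of_pos hr]
  have hne : ∀ t, ζ t - w ≠ 0 := by
    intro t h
    have hzw : ζ t = w := by linear_combination h
    have : ‖w - z₀‖ = r := by
      rw [← hzw, hζ]
      simp [abs_of_pos hr]
    linarith
  have hgc : Continuous g := by
    have h1 : Continuous fun t => (ζ t - w)⁻¹ :=
      ((hζc.sub continuous_const).inv₀ hne)
    have h2 : Continuous fun t => f (ζ t) :=
      hf.continuousOn.comp_continuous hζc fun t => hU (hζmem t)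
    exact (h1.mul h2).mul (by continuity)
  -- the key complex Cauchy integral formula
  have hd : DiffContOnCl ℂ f (Metric.ball z₀ r) := by
    refine ⟨hf.mono ?_, hf.continuousOn.mono ?_⟩
    · exact (Metric.ball_subset_closedBall).trans hU
    · exact (Metric.closure_ball_subset_closedBall).trans hU
  have hwmem : w ∈ Metric.ball z₀ r := by
    simpa [Metric.mem_ball, Complex.dist_eq] using hw
  have key : ∫ t in (0:ℝ)..(2 * Real.pi), g t = (2 * Real.pi * Complex.I) * f w := by
    have h := hd.circleIntegral_sub_inv_smul hwmem
    rw [circleIntegral] at h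
    simp only [deriv_circleMap, smul_eq_mul] at h
    rw [← h]
    apply intervalIntegral.integral_congr
    intro t _
    simp only [hg, circleMap, hζ]
    push_cast
    ring
  -- continuous linear map version of φ
  let φL : ℂ →L[ℝ] ℍ[ℝ] := LinearMap.toContinuousLinearMap φ.toLinearMap
  have hφL : ∀ z, φL z = φ z := fun z => rfl
  have heq : ∀ t, (γ t - φ w)⁻¹ * φ (f (ζ t)) * γ' t = φL (g t) := by
    intro t
    rw [hφL, hγ, hγ', hg]
    simp only [map_mul, ← map_sub]
    rw [map_inv₀]
  calc ∫ t in (0:ℝ)..(2 * Real.pi), (γ t - φ w)⁻¹ * φ (f (ζ t)) * γ' t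
      = ∫ t in (0:ℝ)..(2 * Real.pi), φL (g t) := by
        exact intervalIntegral.integral_congr fun t _ => heq t
    _ = φL (∫ t in (0:ℝ)..(2 * Real.pi), g t) :=
        φL.intervalIntegral_comp_comm (hgc.intervalIntegrable 0 (2 * Real.pi))
    _ = (2 * Real.pi) • (I * φ (f w)) := by
        rw [key, hφL]
        have : (2 * Real.pi * Complex.I) * f w
            = (2 * Real.pi : ℝ) • (Complex.I * f w) := by
          simp [Complex.real_smul]; ring
        rw [this, map_smul, map_mul, hφ]
end

section
/- (Quaternionic residue formula on an H-circle.) Let I ∈ ℍ be an imaginary unit, p₀ ∈ ℍ, and 0 ≤ R₁ < R₂ ≤ ∞. Let (a_n)_{n∈ℤ} be quaternions lying in the slice ℂ_I such that для every s with R₁ < s < R₂ both series Σ_{n≥0} ‖a_n‖·sⁿ and Σ_{n≥1} ‖a_{−n}‖·s^{−n} converge, and define f(p) = Σ_{n=0}^∞ a_n·(p − p₀)ⁿ + Σ_{n=1}^∞ a_{−n}·(p − p₀)^{−n} on the annulus R₁ < ‖p − p₀‖ < R₂. Then for every r with R₁ < r < R₂, with γ(t) = p₀ + r·exp(t·I)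 on [0, 2π]: ∫_0^{2π} f(γ(t)) * γ'(t) dt = 2π·I·a_{−1}; that is, the contour integral of f around the H-circle equals 2π·I times the residue of f at p₀ (the coefficient of (p − p₀)^{−1}). -/
open scoped Quaternion
open MeasureTheory

lemma qres_I_re {I : ℍ[ℝ]} (hI : I * I = -1) : I.re = 0 := by
  have h := congrArg QuaternionAlgebra.re hI
  have h1 := congrArg QuaternionAlgebra.imI hI
  have h2 := congrArg QuaternionAlgebra.imJ hI
  have h3 := congrArg QuaternionAlgebra.imK hI
  simp [Quaternion.re_mul, Quaternion.imI_mul, Quaternion.imJ_mul, Quaternion.imK_mul] at h h1 h2 h3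
  nlinarith [sq_nonneg I.re, sq_nonneg I.imI, sq_nonneg I.imJ, sq_nonneg I.imK]

lemma qres_I_im_sq {I : ℍ[ℝ]} (hI : I * I = -1) :
    I.imI ^ 2 + I.imJ ^ 2 + I.imK ^ 2 = 1 := by
  have h := congrArg QuaternionAlgebra.re hI
  have h0 := qres_I_re hI
  simp [Quaternion.re_mul] at h
  nlinarith

lemma qres_norm_lift {I : ℍ[ℝ]} (hI : I * I = -1) (x v : ℝ) :
    ‖(x : ℍ[ℝ]) + v • I‖ = Real.sqrt (x ^ 2 + v ^ 2) := by
  have h0 := qres_I_re hI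
  have h1 := qres_I_im_sq hI
  have hns : Quaternion.normSq ((x : ℍ[ℝ]) + v • I) = x ^ 2 + v ^ 2 := by
    simp [Quaternion.normSq_def', h0]
    nlinarith
  have := Quaternion.normSq_eq_norm_mul_self ((x : ℍ[ℝ]) + v • I)
  rw [hns] at this
  rw [this, Real.sqrt_mul_self (norm_nonneg _)]

lemma qres_int_exp (k : ℤ) (hk : k ≠ 0) (c : ℂ) (hc : c = (k : ℂ) * Complex.I) :
    ∫ t in (0:ℝ)..(2 * Real.pi), Complex.exp (c * t) = 0 := by
  subst hc
  rw [integral_exp_mul_complex (by simp [hk, Complex.I_ne_zero])]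
  have : (k : ℂ) * Complex.I * (2 * Real.pi : ℝ) = k * (2 * Real.pi * Complex.I) := by
    push_cast; ring
  rw [this, Complex.exp_int_mul_two_pi_mul_I]
  simp

theorem quaternion_residue_formula
    (I : ℍ[ℝ]) (hI : I * I = -1) (p₀ : ℍ[ℝ])
    (R₁ : ℝ) (R₂ : ENNReal) (hR₁ : 0 ≤ R₁) (hR₁₂ : ENNReal.ofReal R₁ < R₂)
    (a : ℤ → ℍ[ℝ]) (ha : ∀ n : ℤ, ∃ x v : ℝ, a n = (x : ℍ[ℝ]) + v • I)
    (hsumPos : ∀ s : ℝ, R₁ < s → ENNReal.ofReal s < R₂ →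
      Summable (fun n : ℕ => ‖a (n : ℤ)‖ * s ^ n))
    (hsumNeg : ∀ s : ℝ, R₁ < s → ENNReal.ofReal s < R₂ →
      Summable (fun n : ℕ => ‖a (-(n : ℤ) - 1)‖ * s⁻¹ ^ (n + 1)))
    (f : ℍ[ℝ] → ℍ[ℝ])
    (hf : ∀ p : ℍ[ℝ], R₁ < ‖p - p₀‖ → ENNReal.ofReal ‖p - p₀‖ < R₂ →
      f p = (∑' n : ℕ, a (n : ℤ) * (p - p₀) ^ n)
        + ∑' n : ℕ, a (-(n : ℤ) - 1) * ((p - p₀)⁻¹) ^ (n + 1))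
    (r : ℝ) (hr₁ : R₁ < r) (hr₂ : ENNReal.ofReal r < R₂)
    (γ γ' : ℝ → ℍ[ℝ])
    (hγ : ∀ t, γ t = p₀ + r • NormedSpace.exp (t • I))
    (hγ' : ∀ t, γ' t = r • (I * NormedSpace.exp (t • I))) :
    ∫ t in (0:ℝ)..(2 * Real.pi), f (γ t) * γ' t = (2 * Real.pi) • (I * a (-1)) := by
  have hr0 : 0 < r := lt_of_le_of_lt hR₁ hr₁
  have hrne : r ≠ 0 := ne_of_gt hr0
  set φ : ℂ →ₐ[ℝ] ℍ[ℝ] := Complex.liftAux I hI with hφdef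
  have hφI : φ Complex.I = I := Complex.liftAux_apply_I I hI
  have hφap : ∀ w : ℂ, φ w = ((w.re : ℝ) : ℍ[ℝ]) + w.im • I := by
    intro w
    rw [hφdef, Complex.liftAux_apply]
    rfl
  have hφnorm : ∀ w : ℂ, ‖φ w‖ = ‖w‖ := by
    intro w
    rw [hφap, qres_norm_lift hI, Complex.norm_def, Complex.normSq_apply]
    ring_nf
  have hφcont : Continuous φ := φ.toLinearMap.continuous_of_finiteDimensional
  set Φ : ℂ →L[ℝ] ℍ[ℝ] := { toLinearMap := φ.toLinearMap, cont := hφcont } with hΦdef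
  have hΦap : ∀ w : ℂ, Φ w = φ w := fun w => rfl
  -- the complex coefficients
  choose xf vf hxv using ha
  set α : ℤ → ℂ := fun n => ⟨xf n, vf n⟩ with hαdef
  have hφα : ∀ n : ℤ, φ (α n) = a n := by
    intro n
    rw [hφap, hxv n]
  have hαn : ∀ n : ℤ, ‖α n‖ = ‖a n‖ := by
    intro n
    rw [← hφα n, hφnorm]
  -- the complex circle
  set e : ℝ → ℂ := fun t => Complex.exp ((t : ℂ) * Complex.I) with hedef
  set z : ℝ → ℂ := fun t => (r : ℂ) * e t with hzdef
  have hecont : Continuous e := by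
    fun_prop
  have hzcont : Continuous z := by fun_prop
  have hene : ∀ t, e t ≠ 0 := fun t => Complex.exp_ne_zero _
  have hzne : ∀ t, z t ≠ 0 := fun t =>
    mul_ne_zero (by exact_mod_cast hrne) (hene t)
  have henorm : ∀ t, ‖e t‖ = 1 := by
    intro t
    rw [hedef]
    simp [Complex.norm_exp_ofReal_mul_I]
  have hznorm : ∀ t, ‖z t‖ = r := by
    intro t
    rw [hzdef]
    simp only [norm_mul, henorm, Complex.norm_real, Real.norm_eq_abs, mul_one]
    exact abs_of_pos hr0
  have hzinorm : ∀ t, ‖(z t)⁻¹‖ = r⁻¹ := by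
    intro t
    rw [norm_inv, hznorm]
  -- exp through φ
  have hexpφ : ∀ t : ℝ, NormedSpace.exp (t • I) = φ (e t) := by
    intro t
    have h1 : φ (t • Complex.I) = t • I := by rw [_root_.map_smul, hφI]
    rw [← h1, ← NormedSpace.map_exp (φ : ℂ →ₐ[ℝ] ℍ[ℝ]) hφcont]
    congr 1
    show NormedSpace.exp (t • Complex.I) = Complex.exp ((t : ℂ) * Complex.I)
    rw [Complex.real_smul, ← Complex.exp_eq_exp_ℂ]
  have hγz : ∀ t, γ t - p₀ = φ (z t) := by
    intro t
    rw [hγ, hzdef]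
    simp only [add_sub_cancel_left, hexpφ]
    rw [show (r : ℂ) * e t = r • e t from Complex.real_smul.symm, _root_.map_smul]
  have hγ'φ : ∀ t, γ' t = φ (Complex.I * z t) := by
    intro t
    rw [hγ', hexpφ, ← hφI, ← map_mul]
    rw [show Complex.I * z t = r • (Complex.I * e t) by
      rw [Complex.real_smul, hzdef]; ring]
    rw [_root_.map_smul, map_mul]
  have hγnorm : ∀ t, ‖γ t - p₀‖ = r := by
    intro t
    rw [hγz, hφnorm, hznorm]
  -- summability
  have hsum1 := hsumPos r hr₁ hr₂
  have hsum2 := hsumNeg r hr₁ hr₂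
  have hnormA : ∀ (n : ℕ) (t : ℝ), ‖α n * z t ^ n‖ = ‖a (n : ℤ)‖ * r ^ n := by
    intro n t
    rw [norm_mul, norm_pow, hznorm, hαn]
  have hnormB : ∀ (n : ℕ) (t : ℝ),
      ‖α (-(n : ℤ) - 1) * ((z t)⁻¹) ^ (n + 1)‖ = ‖a (-(n : ℤ) - 1)‖ * r⁻¹ ^ (n + 1) := by
    intro n t
    rw [norm_mul, norm_pow, hzinorm, hαn]
  have hS1 : ∀ t : ℝ, Summable (fun n : ℕ => α n * z t ^ n) := by
    intro t
    apply Summable.of_norm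
    simpa only [hnormA] using hsum1
  have hS2 : ∀ t : ℝ, Summable (fun n : ℕ => α (-(n : ℤ) - 1) * ((z t)⁻¹) ^ (n + 1)) := by
    intro t
    apply Summable.of_norm
    simpa only [hnormB] using hsum2
  -- f along the circle
  have hfγ : ∀ t : ℝ, f (γ t)
      = φ ((∑' n : ℕ, α n * z t ^ n) + ∑' n : ℕ, α (-(n : ℤ) - 1) * ((z t)⁻¹) ^ (n + 1)) := by
    intro t
    rw [hf (γ t) (by rw [hγnorm]; exact hr₁) (by rw [hγnorm]; exact hr₂)]
    rw [map_add]
    congr 1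
    · rw [show φ (∑' n : ℕ, α n * z t ^ n) = Φ (∑' n : ℕ, α n * z t ^ n) from rfl,
        ContinuousLinearMap.map_tsum Φ (hS1 t)]
      apply tsum_congr
      intro n
      rw [hγz, hΦap, map_mul φ (α (n : ℤ)) (z t ^ n), map_pow φ (z t) n, hφα]
    · rw [show φ (∑' n : ℕ, α (-(n : ℤ) - 1) * ((z t)⁻¹) ^ (n + 1))
          = Φ (∑' n : ℕ, α (-(n : ℤ) - 1) * ((z t)⁻¹) ^ (n + 1)) from rfl,
        ContinuousLinearMap.map_tsum Φ (hS2 t)]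
      apply tsum_congr
      intro n
      rw [hγz, hΦap, map_mul φ (α (-(n : ℤ) - 1)) (((z t)⁻¹) ^ (n + 1)),
        map_pow φ ((z t)⁻¹) (n + 1), map_inv₀ φ (z t), hφα]
  -- the series of functions
  set F : ℕ → ℝ → ℂ := fun n t =>
    α n * z t ^ n * (Complex.I * z t)
    + α (-(n : ℤ) - 1) * ((z t)⁻¹) ^ (n + 1) * (Complex.I * z t) with hFdef
  have hFcont : ∀ n, Continuous (F n) := by
    intro n
    apply Continuous.add
    · fun_prop
    · apply Continuous.mul
      · apply Continuous.mul continuous_const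
        exact (hzcont.inv₀ hzne).pow _
      · fun_prop
  have hHS : ∀ t : ℝ, HasSum (fun n => φ (F n t)) (f (γ t) * γ' t) := by
    intro t
    have h1 : HasSum (fun n => F n t)
        (((∑' n : ℕ, α n * z t ^ n) + ∑' n : ℕ, α (-(n : ℤ) - 1) * ((z t)⁻¹) ^ (n + 1))
          * (Complex.I * z t)) := by
      rw [add_mul]
      exact (((hS1 t).hasSum.mul_right _).add ((hS2 t).hasSum.mul_right _))
    have h2 := Φ.hasSum h1
    simp only [hΦap] at h2
    rw [map_mul] at h2
    rw [hfγ t, hγ'φ t]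
    exact h2
  -- bound
  set bound : ℕ → ℝ := fun n =>
    (‖a (n : ℤ)‖ * r ^ n + ‖a (-(n : ℤ) - 1)‖ * r⁻¹ ^ (n + 1)) * r with hbdef
  have hbound : ∀ (n : ℕ) (t : ℝ), ‖φ (F n t)‖ ≤ bound n := by
    intro n t
    rw [hφnorm, hbdef]
    calc ‖F n t‖ ≤ ‖α n * z t ^ n * (Complex.I * z t)‖
        + ‖α (-(n : ℤ) - 1) * ((z t)⁻¹) ^ (n + 1) * (Complex.I * z t)‖ := norm_add_le _ _
    _ = (‖a (n : ℤ)‖ * r ^ n + ‖a (-(n : ℤ) - 1)‖ * r⁻¹ ^ (n + 1)) * r := by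
        rw [norm_mul (α (n : ℤ) * z t ^ n), norm_mul (α (-(n : ℤ) - 1) * ((z t)⁻¹) ^ (n + 1)),
          hnormA, hnormB, norm_mul, hznorm]
        simp only [Complex.norm_I, one_mul]
        ring
    _ ≤ _ := le_refl _
  have hboundsum : Summable bound := by
    exact (hsum1.add hsum2).mul_right r
  -- swap sum and integral
  have hswap : HasSum (fun n => ∫ t in (0:ℝ)..(2 * Real.pi), φ (F n t))
      (∫ t in (0:ℝ)..(2 * Real.pi), f (γ t) * γ' t) := by
    apply intervalIntegral.hasSum_integral_of_dominated_convergence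
      (bound := fun n (_ : ℝ) => bound n)
    · intro n
      exact ((hφcont.comp (hFcont n)).aestronglyMeasurable)
    · intro n
      filter_upwards with t _ using hbound n t
    · filter_upwards with t _ using hboundsum
    · exact intervalIntegrable_const
    · filter_upwards with t _ using hHS t
  -- compute the individual integrals
  have hInt : ∀ n : ℕ, IntervalIntegrable (F n) volume 0 (2 * Real.pi) :=
    fun n => (hFcont n).intervalIntegrable _ _
  have hepow : ∀ (m : ℕ) (t : ℝ), e t ^ m = Complex.exp ((m : ℂ) * ((t : ℂ) * Complex.I)) :=
    fun m t => (Complex.exp_nat_mul _ m).symm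
  have hA : ∀ (n : ℕ) (t : ℝ), α n * z t ^ n * (Complex.I * z t)
      = (α n * Complex.I * (r : ℂ) ^ (n + 1)) * Complex.exp ((((n : ℂ) + 1) * Complex.I) * t) := by
    intro n t
    have hm : Complex.exp ((((n : ℂ) + 1) * Complex.I) * t) = e t ^ n * e t := by
      rw [hepow, hedef, ← Complex.exp_add]
      congr 1
      ring
    rw [hm, hzdef]
    ring
  have hB : ∀ (n : ℕ) (t : ℝ), α (-(n : ℤ) - 1) * ((z t)⁻¹) ^ (n + 1) * (Complex.I * z t)
      = (α (-(n : ℤ) - 1) * Complex.I * ((r : ℂ)⁻¹) ^ (n + 1) * r)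
        * Complex.exp (((-(n : ℂ)) * Complex.I) * t) := by
    intro n t
    have hie : (e t)⁻¹ = Complex.exp (-((t : ℂ) * Complex.I)) := by
      rw [Complex.exp_neg]
    have hm : Complex.exp (((-(n : ℂ)) * Complex.I) * t)
        = ((e t)⁻¹) ^ (n + 1) * e t := by
      rw [hie, ← Complex.exp_nat_mul, hedef, ← Complex.exp_add]
      congr 1
      push_cast
      ring
    rw [hm, hzdef, mul_inv]
    ring
  have hintA : ∀ n : ℕ, (∫ t in (0:ℝ)..(2 * Real.pi), α n * z t ^ n * (Complex.I * z t)) = 0 := by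
    intro n
    simp_rw [hA]
    rw [intervalIntegral.integral_const_mul]
    rw [qres_int_exp ((n : ℤ) + 1) (by omega) _ (by push_cast; ring)]
    simp
  have hintB : ∀ n : ℕ,
      (∫ t in (0:ℝ)..(2 * Real.pi),
        α (-(n : ℤ) - 1) * ((z t)⁻¹) ^ (n + 1) * (Complex.I * z t))
      = if n = 0 then (2 * Real.pi : ℝ) • (Complex.I * α (-1)) else 0 := by
    intro n
    simp_rw [hB]
    rw [intervalIntegral.integral_const_mul]
    rcases Nat.eq_zero_or_pos n with h | h
    · subst h
      simp only [Nat.cast_zero, neg_zero, zero_mul, Complex.exp_zero,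
        intervalIntegral.integral_const, if_true]
      have hrc : (r : ℂ) ≠ 0 := by exact_mod_cast hrne
      rw [Complex.real_smul, Complex.real_smul]
      field_simp
      simp only [zero_sub, zero_add, pow_one, sub_zero, one_div]
      rw [mul_inv_cancel_right₀ hrc, mul_comm]
    · rw [qres_int_exp (-(n : ℤ)) (by omega) _ (by push_cast; ring)]
      simp [Nat.pos_iff_ne_zero.mp h]
  have hval : ∀ n : ℕ, (∫ t in (0:ℝ)..(2 * Real.pi), φ (F n t))
      = if n = 0 then (2 * Real.pi) • (I * a (-1)) else 0 := by
    intro n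
    rw [show (fun t => φ (F n t)) = fun t => Φ (F n t) from rfl]
    rw [Φ.intervalIntegral_comp_comm (hInt n)]
    have hIA : IntervalIntegrable (fun t => α n * z t ^ n * (Complex.I * z t))
        volume 0 (2 * Real.pi) := by
      apply Continuous.intervalIntegrable
      fun_prop
    have hIB : IntervalIntegrable
        (fun t => α (-(n : ℤ) - 1) * ((z t)⁻¹) ^ (n + 1) * (Complex.I * z t))
        volume 0 (2 * Real.pi) := by
      apply Continuous.intervalIntegrable
      exact ((continuous_const.mul ((hzcont.inv₀ hzne).pow _)).mul
        (continuous_const.mul hzcont))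
    simp only [hFdef]
    rw [intervalIntegral.integral_add hIA hIB, hintA n, hintB n, zero_add]
    split_ifs with h
    · rw [_root_.map_smul, hΦap, map_mul, hφI, hφα]
    · exact map_zero Φ
  have hfinal : HasSum (fun n : ℕ => if n = 0 then (2 * Real.pi) • (I * a (-1)) else 0)
      ((2 * Real.pi) • (I * a (-1))) := hasSum_ite_eq 0 _
  rw [funext hval] at hswap
  exact hswap.unique hfinal
end
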